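/- Let V be a valuation domain with quotient field K, E ⊂ K a strictly pseudo-monotone sequence (pseudo-convergent or pseudo-divergent) having a pseudo-limit in the algebraic closure of K, and let p₁, p₂ be monic irreducible polynomials of minimal degree among those having a root in \bar K that is a pseudo-limit of E. Then v_E(p₁) = v_E(p₂). -/

import Mathlib

open scoped Pointwise Classical

section Defs

variable {K : Type*} [Field K] {Γ : Type*} [LinearOrderedCommGroupWithZero Γ]
variable {Λ : Type*} [LinearOrder Λ]

/-- `E = {s ν}` is pseudo-convergent: (additively) `v(s_ρ−s_ν) < v(s_σ−s_ρ)` for `ν<ρ<σ`.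
In Mathlib's multiplicative convention this reads `v (s σ - s ρ) < v (s ρ - s ν)`. -/
def IsPseudoConvergent (v : Valuation K Γ) (s : Λ → K) : Prop :=
  ∀ ⦃ν ρ σ : Λ⦄, ν < ρ → ρ < σ → v (s σ - s ρ) < v (s ρ - s ν)

/-- `E = {s ν}` is pseudo-divergent: (additively) `v(s_ρ−s_ν) > v(s_σ−s_ρ)` for `ν<ρ<σ`. -/
def IsPseudoDivergent (v : Valuation K Γ) (s : Λ → K) : Prop :=
  ∀ ⦃ν ρ σ : Λ⦄, ν < ρ → ρ < σ → v (s ρ - s ν) < v (s σ - s ρ)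

/-- `E = {s ν}` is pseudo-stationary: the terms are distinct and all pairwise differences
have the same (nonzero) value. -/
def IsPseudoStationary (v : Valuation K Γ) (s : Λ → K) : Prop :=
  (∀ ⦃ν μ : Λ⦄, ν ≠ μ → s ν ≠ s μ) ∧
    ∀ ⦃ν μ ν' μ' : Λ⦄, ν ≠ μ → ν' ≠ μ' → v (s ν - s μ) = v (s ν' - s μ')

/-- A pseudo-monotone sequence: pseudo-convergent, pseudo-divergent or pseudo-stationary. -/
def IsPseudoMonotone (v : Valuation K Γ) (s : Λ → K) : Prop :=
  IsPseudoConvergent v s ∨ IsPseudoDivergent v s ∨ IsPseudoStationary v s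

/-- `α` is a pseudo-limit of the pseudo-convergent sequence `s`:
`v(α − s_ν) = δ_ν` for all `ν`, where `δ_ν = v(s_ρ − s_ν)` for any `ρ > ν`. -/
def IsPseudoLimitPcv (v : Valuation K Γ) (s : Λ → K) (α : K) : Prop :=
  ∀ ⦃ν ρ : Λ⦄, ν < ρ → v (α - s ν) = v (s ρ - s ν)

/-- `α` is a pseudo-limit of the pseudo-divergent sequence `s`:
`v(α − s_ν) = δ_ν` for all sufficiently large `ν`, where `δ_ν = v(s_ρ − s_ν)` for any `ρ < ν`. -/
def IsPseudoLimitPdv (v : Valuation K Γ) (s : Λ → K) (α : K) : Prop :=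
  ∃ N : Λ, ∀ ⦃ν : Λ⦄, N ≤ ν → ∀ ⦃ρ : Λ⦄, ρ < ν → v (α - s ν) = v (s ρ - s ν)

/-- `α` is a pseudo-limit of the pseudo-stationary sequence `s`:
`v(α − s_ν) = δ` for all sufficiently large `ν`, where `δ` is the breadth. -/
def IsPseudoLimitPst (v : Valuation K Γ) (s : Λ → K) (α : K) : Prop :=
  ∃ N : Λ, ∀ ⦃ν : Λ⦄, N ≤ ν → ∀ ⦃μ μ' : Λ⦄, μ ≠ μ' → v (α - s ν) = v (s μ - s μ')

/-- `α` is a pseudo-limit of a strictly pseudo-monotone sequence `s`. -/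
def IsPseudoLimitSPM (v : Valuation K Γ) (s : Λ → K) (α : K) : Prop :=
  (IsPseudoConvergent v s ∧ IsPseudoLimitPcv v s α) ∨
    (IsPseudoDivergent v s ∧ IsPseudoLimitPdv v s α)

/-- The breadth ideal of a pseudo-convergent sequence:
(additively) `{x : v(x) > δ_ν for all ν}`. -/
def BreadthPcv (v : Valuation K Γ) (s : Λ → K) : Set K :=
  {x : K | ∀ ⦃ν ρ : Λ⦄, ν < ρ → v x < v (s ρ - s ν)}

/-- The breadth ideal of a pseudo-divergent sequence:
(additively) `{x : v(x) > δ_ν for some ν}`. -/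
def BreadthPdv (v : Valuation K Γ) (s : Λ → K) : Set K :=
  {x : K | ∃ ν ρ : Λ, ρ < ν ∧ v x < v (s ρ - s ν)}

/-- The breadth ideal of a pseudo-stationary sequence: (additively) `{x : v(x) ≥ δ}`. -/
def BreadthPst (v : Valuation K Γ) (s : Λ → K) : Set K :=
  {x : K | ∀ ⦃ν μ : Λ⦄, ν ≠ μ → v x ≤ v (s ν - s μ)}

/-- The breadth ideal of a sequence which is definitively either pseudo-convergent or
pseudo-stationary: `{x : v(x) ≤ v(s ρ - s ν)` for all sufficiently large `ν < ρ}`. -/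
def BreadthCvStat (v : Valuation K Γ) (s : Λ → K) : Set K :=
  {x : K | ∃ N : Λ, ∀ ⦃ν ρ : Λ⦄, N ≤ ν → ν < ρ → v x ≤ v (s ρ - s ν)}

/-- The ring `V_E` of rational functions mapping the tail of `E` into the valuation ring,
as a subset of `K(X)`. -/
def VESet (v : Valuation K Γ) (s : Λ → K) : Set (RatFunc K) :=
  {φ : RatFunc K | ∃ N : Λ, ∀ ⦃ν : Λ⦄, N ≤ ν → v (RatFunc.eval (RingHom.id K) (s ν) φ) ≤ 1}

end Defs

section FracIdeals

variable {K : Type*} [Field K]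

/-- `I` is a fractional ideal of the valuation subring `A` of `K`. -/
def IsFractionalSub (A : ValuationSubring K) (I : Submodule A K) : Prop :=
  ∃ a : K, a ∈ A ∧ a ≠ 0 ∧ ∀ x ∈ I, a * x ∈ A

/-- `I` is strictly divisorial: it equals the intersection of all principal fractional
ideals properly containing it. -/
def IsStrictlyDivisorial (A : ValuationSubring K) (I : Submodule A K) : Prop :=
  I = ⨅ c ∈ {c : K | I < Submodule.span A {c}}, Submodule.span A {c}

end FracIdeals

universe u

/-- `p` belongs to `𝒫_E`: `p` is a monic irreducible polynomial of `K[X]` having at least one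
root in the algebraic closure `K̄` which is a pseudo-limit of `E` with respect to some
extension `u` of `v` to `K̄`. -/
def InPE {K : Type u} [Field K] {Γ : Type*} [LinearOrderedCommGroupWithZero Γ]
    (v : Valuation K Γ) {Λ : Type*} [LinearOrder Λ] (s : Λ → K) (p : Polynomial K) : Prop :=
  p.Monic ∧ Irreducible p ∧
    ∃ (Γ' : Type u) (_ : LinearOrderedCommGroupWithZero Γ')
      (u : Valuation (AlgebraicClosure K) Γ'),
      (u.comap (algebraMap K (AlgebraicClosure K))).IsEquiv v ∧
      ∃ x : AlgebraicClosure K, Polynomial.aeval x p = 0 ∧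
        IsPseudoLimitSPM u (fun ν => algebraMap K (AlgebraicClosure K) (s ν)) x

section Aux2

variable {L : Type*} [Field L] {Γ' : Type*} [LinearOrderedCommGroupWithZero Γ']
variable {Λ : Type*} [LinearOrder Λ]
variable (u : Valuation L Γ') (t : Λ → L)

/-- For a pcv sequence, the value of a difference depends only on the lower index. -/
lemma pcvDiffIndep (h : IsPseudoConvergent u t) {ν ρ ρ' : Λ} (h1 : ν < ρ) (h2 : ν < ρ') :
    u (t ρ - t ν) = u (t ρ' - t ν) := by
  have key : ∀ ⦃a b : Λ⦄, ν < a → a < b → u (t b - t ν) = u (t a - t ν) := by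
    intro a b ha hab
    have hlt : u (t b - t a) < u (t a - t ν) := h ha hab
    have : t b - t ν = (t b - t a) + (t a - t ν) := by ring
    rw [this, Valuation.map_add_eq_of_lt_right _ hlt]
  rcases lt_trichotomy ρ ρ' with hlt | rfl | hlt
  · exact (key h1 hlt).symm
  · rfl
  · exact key h2 hlt

lemma pcvDeltaNe (hnomax : ∀ ν : Λ, ∃ ρ : Λ, ν < ρ) (h : IsPseudoConvergent u t)
    {ν ρ : Λ} (h1 : ν < ρ) : u (t ρ - t ν) ≠ 0 := by
  obtain ⟨σ, hσ⟩ := hnomax ρ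
  exact ne_of_gt (lt_of_le_of_lt zero_le' (h h1 hσ))

lemma pcvDichotomy (hnomax : ∀ ν : Λ, ∃ ρ : Λ, ν < ρ) (h : IsPseudoConvergent u t) (γ : L) :
    IsPseudoLimitPcv u t γ ∨ ∃ (N : Λ) (c : Γ'), c ≠ 0 ∧ ∀ ⦃ν : Λ⦄, N < ν → u (γ - t ν) = c := by
  by_cases hl : IsPseudoLimitPcv u t γ
  · exact Or.inl hl
  right
  simp only [IsPseudoLimitPcv, not_forall] at hl
  obtain ⟨ν₀, ρ₀, h1, hne⟩ := hl
  have hδ0 : u (t ρ₀ - t ν₀) ≠ 0 := pcvDeltaNe u t hnomax h h1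
  have hδμ : ∀ ⦃μ : Λ⦄, ν₀ < μ → u (t μ - t ν₀) = u (t ρ₀ - t ν₀) := fun μ hμ =>
    pcvDiffIndep u t h hμ h1
  rcases (lt_or_gt_of_ne hne) with hlt | hgt
  · refine ⟨ν₀, u (t ρ₀ - t ν₀), hδ0, fun μ hμ => ?_⟩
    have heq : γ - t μ = (γ - t ν₀) - (t μ - t ν₀) := by ring
    rw [heq, Valuation.map_sub_eq_of_lt_right _ (by rw [hδμ hμ]; exact hlt), hδμ hμ]
  · refine ⟨ν₀, u (γ - t ν₀), ne_of_gt (lt_of_le_of_lt zero_le' hgt), fun μ hμ => ?_⟩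
    have heq : γ - t μ = (γ - t ν₀) - (t μ - t ν₀) := by ring
    rw [heq, Valuation.map_sub_eq_of_lt_left _ (by rw [hδμ hμ]; exact hgt)]

lemma pcvLimitFactor (hnomax : ∀ ν : Λ, ∃ ρ : Λ, ν < ρ) (h : IsPseudoConvergent u t)
    {γ : L} (hγ : IsPseudoLimitPcv u t γ) {ν ρ : Λ} (h1 : ν < ρ) :
    u (γ - t ρ) < u (γ - t ν) ∧ u (γ - t ν) ≠ 0 := by
  obtain ⟨σ, hσ⟩ := hnomax ρ
  constructor
  · rw [hγ hσ, hγ h1]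
    exact h h1 hσ
  · rw [hγ h1]
    exact pcvDeltaNe u t hnomax h h1

/-- For a pdv sequence, the value of a difference depends only on the upper index. -/
lemma pdvDiffIndep (h : IsPseudoDivergent u t) {ν ρ ρ' : Λ} (h1 : ρ < ν) (h2 : ρ' < ν) :
    u (t ν - t ρ) = u (t ν - t ρ') := by
  have key : ∀ ⦃a b : Λ⦄, a < b → b < ν → u (t ν - t a) = u (t ν - t b) := by
    intro a b hab hb
    have hlt : u (t b - t a) < u (t ν - t b) := h hab hb
    have : t ν - t a = (t ν - t b) + (t b - t a) := by ring
    rw [this, Valuation.map_add_eq_of_lt_left _ hlt]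
  rcases lt_trichotomy ρ ρ' with hlt | rfl | hlt
  · exact key hlt h2
  · rfl
  · exact (key hlt h1).symm

lemma pdvDichotomy (hab : ∃ a b : Λ, a < b) (hnomax : ∀ ν : Λ, ∃ ρ : Λ, ν < ρ)
    (h : IsPseudoDivergent u t) (γ : L) :
    IsPseudoLimitPdv u t γ ∨ ∃ (N : Λ) (c : Γ'), c ≠ 0 ∧ ∀ ⦃ν : Λ⦄, N < ν → u (γ - t ν) = c := by
  by_cases hc : ∃ ν₁ : Λ, ∀ σ : Λ, ν₁ < σ → u (t σ - t ν₁) < u (γ - t ν₁)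
  · right
    obtain ⟨ν₁, hν₁⟩ := hc
    obtain ⟨σ₁, hσ₁⟩ := hnomax ν₁
    refine ⟨ν₁, u (γ - t ν₁), ne_of_gt (lt_of_le_of_lt zero_le' (hν₁ σ₁ hσ₁)), fun σ hσ => ?_⟩
    have heq : γ - t σ = (γ - t ν₁) - (t σ - t ν₁) := by ring
    rw [heq, Valuation.map_sub_eq_of_lt_left _ (hν₁ σ hσ)]
  · left
    push_neg at hc
    obtain ⟨a, b, hab⟩ := hab
    obtain ⟨σ₀, hσ₀b, hσ₀⟩ := hc b
    obtain ⟨N, hN⟩ := hnomax σ₀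
    refine ⟨N, fun ν hν ρ hρ => ?_⟩
    have hσ₀ν : σ₀ < ν := lt_of_lt_of_le hN hν
    have hbν : b < ν := hσ₀b.trans hσ₀ν
    have h1 : u (t ν - t b) = u (t ν - t σ₀) := by
      have : t ν - t b = (t ν - t σ₀) + (t σ₀ - t b) := by ring
      rw [this, Valuation.map_add_eq_of_lt_left _ (h hσ₀b hσ₀ν)]
    have h2 : u (γ - t b) < u (t ν - t b) := by
      rw [h1]
      exact lt_of_le_of_lt hσ₀ (h hσ₀b hσ₀ν)
    have h3 : u (γ - t ν) = u (t ν - t b) := by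
      have heq : γ - t ν = (γ - t b) - (t ν - t b) := by ring
      rw [heq, Valuation.map_sub_eq_of_lt_right _ h2]
    rw [h3, pdvDiffIndep u t h hbν hρ, Valuation.map_sub_swap]

lemma pdvLimitFactor (hab : ∃ a b : Λ, a < b) (hnomax : ∀ ν : Λ, ∃ ρ : Λ, ν < ρ)
    (h : IsPseudoDivergent u t) {γ : L} (hγ : IsPseudoLimitPdv u t γ) :
    ∃ N₀ : Λ, ∀ ⦃ν ρ : Λ⦄, N₀ ≤ ν → ν < ρ →
      u (γ - t ν) < u (γ - t ρ) ∧ u (γ - t ν) ≠ 0 ∧ u (γ - t ρ) ≠ 0 := by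
  obtain ⟨N, hN⟩ := hγ
  obtain ⟨a, b, hab⟩ := hab
  obtain ⟨N₀, hN₀⟩ := hnomax (max N b)
  refine ⟨N₀, fun ν ρ hν hνρ => ?_⟩
  have hNν : N ≤ ν := le_of_lt (lt_of_le_of_lt (le_max_left _ _) (lt_of_lt_of_le hN₀ hν))
  have hbν : b < ν := lt_of_le_of_lt (le_max_right _ _) (lt_of_lt_of_le hN₀ hν)
  have haν : a < ν := hab.trans hbν
  have hNρ : N ≤ ρ := hNν.trans (le_of_lt hνρ)
  have hv : u (γ - t ν) = u (t ν - t b) := by rw [hN hNν hbν, Valuation.map_sub_swap]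
  have hρv : u (γ - t ρ) = u (t ρ - t ν) := by rw [hN hNρ hνρ, Valuation.map_sub_swap]
  have hνne : u (t ν - t b) ≠ 0 := ne_of_gt (lt_of_le_of_lt zero_le' (h hab hbν))
  refine ⟨?_, by rw [hv]; exact hνne, ?_⟩
  · rw [hv, hρv]
    exact h hbν hνρ
  · rw [hρv]
    exact ne_of_gt (lt_of_le_of_lt zero_le' (h hbν hνρ))

lemma prodTailConst [Nonempty Λ] (M : Multiset L)
    (hM : ∀ γ ∈ M, ∃ (N : Λ) (c : Γ'), c ≠ 0 ∧ ∀ ⦃ν : Λ⦄, N < ν → u (γ - t ν) = c) :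
    ∃ (N : Λ) (C : Γ'), C ≠ 0 ∧ ∀ ⦃ν : Λ⦄, N < ν →
      (M.map fun γ => u (t ν - γ)).prod = C := by
  induction M using Multiset.induction with
  | empty => exact ⟨Classical.arbitrary Λ, 1, one_ne_zero, fun ν _ => by simp⟩
  | cons γ M ih =>
    obtain ⟨N₁, c₁, hc₁, h₁⟩ := hM γ (Multiset.mem_cons_self _ _)
    obtain ⟨N₂, C₂, hC₂, h₂⟩ := ih fun γ' hγ' => hM γ' (Multiset.mem_cons_of_mem hγ')
    refine ⟨max N₁ N₂, c₁ * C₂, mul_ne_zero hc₁ hC₂, fun ν hν => ?_⟩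
    rw [Multiset.map_cons, Multiset.prod_cons, h₂ (lt_of_le_of_lt (le_max_right _ _) hν),
      Valuation.map_sub_swap, h₁ (lt_of_le_of_lt (le_max_left _ _) hν)]

lemma prodTailAnti [Nonempty Λ] (M : Multiset L)
    (hM : ∀ γ ∈ M, ∃ N : Λ, ∀ ⦃ν ρ : Λ⦄, N ≤ ν → ν < ρ →
      u (γ - t ρ) ≤ u (γ - t ν) ∧ u (γ - t ν) ≠ 0 ∧ u (γ - t ρ) ≠ 0) :
    ∃ N : Λ, ∀ ⦃ν ρ : Λ⦄, N ≤ ν → ν < ρ →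
      (M.map fun γ => u (t ρ - γ)).prod ≤ (M.map fun γ => u (t ν - γ)).prod ∧
      (M.map fun γ => u (t ν - γ)).prod ≠ 0 ∧ (M.map fun γ => u (t ρ - γ)).prod ≠ 0 := by
  induction M using Multiset.induction with
  | empty => exact ⟨Classical.arbitrary Λ, fun ν ρ _ _ => by simp⟩
  | cons γ M ih =>
    obtain ⟨N₁, h₁⟩ := hM γ (Multiset.mem_cons_self _ _)
    obtain ⟨N₂, h₂⟩ := ih fun γ' hγ' => hM γ' (Multiset.mem_cons_of_mem hγ')
    refine ⟨max N₁ N₂, fun ν ρ hν hνρ => ?_⟩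
    obtain ⟨ha, hb, hc⟩ := h₁ (le_trans (le_max_left _ _) hν) hνρ
    obtain ⟨ha', hb', hc'⟩ := h₂ (le_trans (le_max_right _ _) hν) hνρ
    rw [Multiset.map_cons, Multiset.prod_cons, Multiset.map_cons, Multiset.prod_cons,
      Valuation.map_sub_swap (v := u) (t ν) γ, Valuation.map_sub_swap (v := u) (t ρ) γ]
    exact ⟨mul_le_mul' ha ha', mul_ne_zero hb hb', mul_ne_zero hc hc'⟩

lemma prodTailMono [Nonempty Λ] (M : Multiset L)
    (hM : ∀ γ ∈ M, ∃ N : Λ, ∀ ⦃ν ρ : Λ⦄, N ≤ ν → ν < ρ →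
      u (γ - t ν) ≤ u (γ - t ρ) ∧ u (γ - t ν) ≠ 0 ∧ u (γ - t ρ) ≠ 0) :
    ∃ N : Λ, ∀ ⦃ν ρ : Λ⦄, N ≤ ν → ν < ρ →
      (M.map fun γ => u (t ν - γ)).prod ≤ (M.map fun γ => u (t ρ - γ)).prod ∧
      (M.map fun γ => u (t ν - γ)).prod ≠ 0 ∧ (M.map fun γ => u (t ρ - γ)).prod ≠ 0 := by
  induction M using Multiset.induction with
  | empty => exact ⟨Classical.arbitrary Λ, fun ν ρ _ _ => by simp⟩
  | cons γ M ih =>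
    obtain ⟨N₁, h₁⟩ := hM γ (Multiset.mem_cons_self _ _)
    obtain ⟨N₂, h₂⟩ := ih fun γ' hγ' => hM γ' (Multiset.mem_cons_of_mem hγ')
    refine ⟨max N₁ N₂, fun ν ρ hν hνρ => ?_⟩
    obtain ⟨ha, hb, hc⟩ := h₁ (le_trans (le_max_left _ _) hν) hνρ
    obtain ⟨ha', hb', hc'⟩ := h₂ (le_trans (le_max_right _ _) hν) hνρ
    rw [Multiset.map_cons, Multiset.prod_cons, Multiset.map_cons, Multiset.prod_cons,
      Valuation.map_sub_swap (v := u) (t ν) γ, Valuation.map_sub_swap (v := u) (t ρ) γ]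
    exact ⟨mul_le_mul' ha ha', mul_ne_zero hb hb', mul_ne_zero hc hc'⟩

lemma mulLtMulOfLtOfLe {Γ'' : Type*} [LinearOrderedCommGroupWithZero Γ'']
    {a b c d : Γ''} (h1 : a < b) (h2 : c ≤ d) (hc : c ≠ 0) : a * c < b * d := by
  have hd : d ≠ 0 := fun h => hc (le_antisymm (h ▸ h2) zero_le')
  rw [mul_comm a c, mul_comm b d]
  exact mul_lt_mul_of_le_of_lt_of_nonneg_of_pos h2 h1 zero_le' (zero_lt_iff.mpr hd)

lemma prodStrictAnti [Nonempty Λ] (hnomax : ∀ ν : Λ, ∃ ρ : Λ, ν < ρ)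
    (h : IsPseudoConvergent u t) (M : Multiset L) {α : L} (hα : α ∈ M)
    (hαlim : IsPseudoLimitPcv u t α)
    (hM : ∀ γ ∈ M, ∃ N : Λ, ∀ ⦃ν ρ : Λ⦄, N ≤ ν → ν < ρ →
      u (γ - t ρ) ≤ u (γ - t ν) ∧ u (γ - t ν) ≠ 0 ∧ u (γ - t ρ) ≠ 0) :
    ∃ N : Λ, ∀ ⦃ν ρ : Λ⦄, N ≤ ν → ν < ρ →
      (M.map fun γ => u (t ρ - γ)).prod < (M.map fun γ => u (t ν - γ)).prod := by
  obtain ⟨N₂, h₂⟩ := prodTailAnti u t (M.erase α)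
    (fun γ hγ => hM γ (Multiset.mem_of_mem_erase hγ))
  refine ⟨N₂, fun ν ρ hν hνρ => ?_⟩
  rw [← Multiset.cons_erase hα, Multiset.map_cons, Multiset.prod_cons, Multiset.map_cons,
    Multiset.prod_cons, Valuation.map_sub_swap (v := u) (t ν) α,
    Valuation.map_sub_swap (v := u) (t ρ) α]
  obtain ⟨ha, _, hc⟩ := h₂ hν hνρ
  exact mulLtMulOfLtOfLe (pcvLimitFactor u t hnomax h hαlim hνρ).1 ha hc

lemma prodStrictMono [Nonempty Λ] (hab : ∃ a b : Λ, a < b)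
    (hnomax : ∀ ν : Λ, ∃ ρ : Λ, ν < ρ)
    (h : IsPseudoDivergent u t) (M : Multiset L) {α : L} (hα : α ∈ M)
    (hαlim : IsPseudoLimitPdv u t α)
    (hM : ∀ γ ∈ M, ∃ N : Λ, ∀ ⦃ν ρ : Λ⦄, N ≤ ν → ν < ρ →
      u (γ - t ν) ≤ u (γ - t ρ) ∧ u (γ - t ν) ≠ 0 ∧ u (γ - t ρ) ≠ 0) :
    ∃ N : Λ, ∀ ⦃ν ρ : Λ⦄, N ≤ ν → ν < ρ →
      (M.map fun γ => u (t ν - γ)).prod < (M.map fun γ => u (t ρ - γ)).prod := by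
  obtain ⟨N₂, h₂⟩ := prodTailMono u t (M.erase α)
    (fun γ hγ => hM γ (Multiset.mem_of_mem_erase hγ))
  obtain ⟨N₀, h₀⟩ := pdvLimitFactor u t hab hnomax h hαlim
  refine ⟨max N₀ N₂, fun ν ρ hν hνρ => ?_⟩
  rw [← Multiset.cons_erase hα, Multiset.map_cons, Multiset.prod_cons, Multiset.map_cons,
    Multiset.prod_cons, Valuation.map_sub_swap (v := u) (t ν) α,
    Valuation.map_sub_swap (v := u) (t ρ) α]
  obtain ⟨ha, hb, _⟩ := h₂ (le_trans (le_max_right _ _) hν) hνρ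
  exact mulLtMulOfLtOfLe (h₀ (le_trans (le_max_left _ _) hν) hνρ).1 ha hb

lemma valEvalEqProd {K : Type*} [Field K] [IsAlgClosed L] (φ : K →+* L)
    (f : Polynomial K) (x : L) :
    u ((f.map φ).eval x) =
      u ((f.map φ).leadingCoeff) * (((f.map φ).roots).map fun γ => u (x - γ)).prod := by
  conv_lhs => rw [Polynomial.Splits.eq_prod_roots
    (IsAlgClosed.splits (f.map φ))]
  rw [Polynomial.eval_mul, Polynomial.eval_C, Valuation.map_mul,
    Polynomial.eval_multiset_prod, map_multiset_prod, Multiset.map_map, Multiset.map_map]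
  congr 1
  rw [Multiset.map_congr rfl]
  intro γ _
  simp

end Aux2

section Aux3

variable {K : Type*} [Field K] {Γ : Type*} [LinearOrderedCommGroupWithZero Γ]
variable {L : Type*} [Field L] [IsAlgClosed L]
variable {Γ' : Type*} [LinearOrderedCommGroupWithZero Γ']
variable {Λ : Type*} [LinearOrder Λ] [Nonempty Λ]
variable (u : Valuation L Γ') (φ : K →+* L) (s : Λ → K)

lemma polyRoot_mem {f : Polynomial K} (hf : f ≠ 0) {α : L} (hα : Polynomial.eval₂ φ α f = 0) :
    α ∈ (f.map φ).roots := by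
  rw [Polynomial.mem_roots ((Polynomial.map_ne_zero_iff φ.injective).mpr hf),
    Polynomial.IsRoot, Polynomial.eval_map]
  exact hα

lemma keyA_pcv (hnomax : ∀ ν : Λ, ∃ ρ : Λ, ν < ρ)
    (hu : IsPseudoConvergent u (fun ν => φ (s ν)))
    {f : Polynomial K} (hf : f ≠ 0) {α : L} (hroot : Polynomial.eval₂ φ α f = 0)
    (hlim : IsPseudoLimitPcv u (fun ν => φ (s ν)) α) :
    ∃ N : Λ, ∀ ⦃ν ρ : Λ⦄, N ≤ ν → ν < ρ →
      u (φ (f.eval (s ρ))) < u (φ (f.eval (s ν))) := by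
  set t : Λ → L := fun ν => φ (s ν) with htdef
  have hαmem : α ∈ (f.map φ).roots := polyRoot_mem φ hf hroot
  have hM : ∀ γ ∈ (f.map φ).roots, ∃ N : Λ, ∀ ⦃ν ρ : Λ⦄, N ≤ ν → ν < ρ →
      u (γ - t ρ) ≤ u (γ - t ν) ∧ u (γ - t ν) ≠ 0 ∧ u (γ - t ρ) ≠ 0 := by
    intro γ _
    rcases pcvDichotomy u t hnomax hu γ with hl | ⟨N, c, hc, hcN⟩
    · refine ⟨Classical.arbitrary Λ, fun ν ρ _ hνρ => ?_⟩
      obtain ⟨σ, hσ⟩ := hnomax ρ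
      exact ⟨(pcvLimitFactor u t hnomax hu hl hνρ).1.le,
        (pcvLimitFactor u t hnomax hu hl hνρ).2, (pcvLimitFactor u t hnomax hu hl hσ).2⟩
    · obtain ⟨N', hN'⟩ := hnomax N
      refine ⟨N', fun ν ρ hν hνρ => ?_⟩
      rw [hcN (lt_of_lt_of_le hN' hν), hcN ((lt_of_lt_of_le hN' hν).trans hνρ)]
      exact ⟨le_rfl, hc, hc⟩
  obtain ⟨N, hN⟩ := prodStrictAnti u t hnomax hu _ hαmem hlim hM
  refine ⟨N, fun ν ρ hν hνρ => ?_⟩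
  have h3 : u ((f.map φ).eval (t ρ)) < u ((f.map φ).eval (t ν)) := by
    rw [valEvalEqProd u φ f (t ρ), valEvalEqProd u φ f (t ν)]
    exact mul_lt_mul_of_le_of_lt_of_nonneg_of_pos le_rfl (hN hν hνρ) zero_le'
      (zero_lt_iff.mpr (u.ne_zero_iff.mpr (Polynomial.leadingCoeff_ne_zero.mpr
        ((Polynomial.map_ne_zero_iff φ.injective).mpr hf))))
  rwa [htdef, Polynomial.eval_map, Polynomial.eval₂_at_apply,
    Polynomial.eval_map, Polynomial.eval₂_at_apply] at h3

lemma keyA_pdv (hab : ∃ a b : Λ, a < b) (hnomax : ∀ ν : Λ, ∃ ρ : Λ, ν < ρ)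
    (hu : IsPseudoDivergent u (fun ν => φ (s ν)))
    {f : Polynomial K} (hf : f ≠ 0) {α : L} (hroot : Polynomial.eval₂ φ α f = 0)
    (hlim : IsPseudoLimitPdv u (fun ν => φ (s ν)) α) :
    ∃ N : Λ, ∀ ⦃ν ρ : Λ⦄, N ≤ ν → ν < ρ →
      u (φ (f.eval (s ν))) < u (φ (f.eval (s ρ))) := by
  set t : Λ → L := fun ν => φ (s ν) with htdef
  have hαmem : α ∈ (f.map φ).roots := polyRoot_mem φ hf hroot
  have hM : ∀ γ ∈ (f.map φ).roots, ∃ N : Λ, ∀ ⦃ν ρ : Λ⦄, N ≤ ν → ν < ρ →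
      u (γ - t ν) ≤ u (γ - t ρ) ∧ u (γ - t ν) ≠ 0 ∧ u (γ - t ρ) ≠ 0 := by
    intro γ _
    rcases pdvDichotomy u t hab hnomax hu γ with hl | ⟨N, c, hc, hcN⟩
    · obtain ⟨N₀, h₀⟩ := pdvLimitFactor u t hab hnomax hu hl
      exact ⟨N₀, fun ν ρ hν hνρ => ⟨(h₀ hν hνρ).1.le, (h₀ hν hνρ).2.1, (h₀ hν hνρ).2.2⟩⟩
    · obtain ⟨N', hN'⟩ := hnomax N
      refine ⟨N', fun ν ρ hν hνρ => ?_⟩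
      rw [hcN (lt_of_lt_of_le hN' hν), hcN ((lt_of_lt_of_le hN' hν).trans hνρ)]
      exact ⟨le_rfl, hc, hc⟩
  obtain ⟨N, hN⟩ := prodStrictMono u t hab hnomax hu _ hαmem hlim hM
  refine ⟨N, fun ν ρ hν hνρ => ?_⟩
  have h3 : u ((f.map φ).eval (t ν)) < u ((f.map φ).eval (t ρ)) := by
    rw [valEvalEqProd u φ f (t ρ), valEvalEqProd u φ f (t ν)]
    exact mul_lt_mul_of_le_of_lt_of_nonneg_of_pos le_rfl (hN hν hνρ) zero_le'
      (zero_lt_iff.mpr (u.ne_zero_iff.mpr (Polynomial.leadingCoeff_ne_zero.mpr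
        ((Polynomial.map_ne_zero_iff φ.injective).mpr hf))))
  rwa [htdef, Polynomial.eval_map, Polynomial.eval₂_at_apply,
    Polynomial.eval_map, Polynomial.eval₂_at_apply] at h3

lemma keyB {f : Polynomial K} (hf : f ≠ 0)
    (hroots : ∀ γ ∈ (f.map φ).roots, ∃ (N : Λ) (c : Γ'), c ≠ 0 ∧
      ∀ ⦃ν : Λ⦄, N < ν → u (γ - φ (s ν)) = c) :
    ∃ (N : Λ) (C : Γ'), C ≠ 0 ∧ ∀ ⦃ν : Λ⦄, N < ν → u (φ (f.eval (s ν))) = C := by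
  set t : Λ → L := fun ν => φ (s ν) with htdef
  obtain ⟨N, C₀, hC₀, hh⟩ := prodTailConst u t _ hroots
  refine ⟨N, u ((f.map φ).leadingCoeff) * C₀,
    mul_ne_zero (u.ne_zero_iff.mpr (Polynomial.leadingCoeff_ne_zero.mpr
      ((Polynomial.map_ne_zero_iff φ.injective).mpr hf))) hC₀, fun ν hν => ?_⟩
  have h3 : u ((f.map φ).eval (t ν)) = u ((f.map φ).leadingCoeff) * C₀ := by
    rw [valEvalEqProd u φ f (t ν), hh hν]
  rwa [htdef, Polynomial.eval_map, Polynomial.eval₂_at_apply] at h3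

lemma pcvTransfer (v : Valuation K Γ) (heq : (u.comap φ).IsEquiv v) :
    IsPseudoConvergent u (fun ν => φ (s ν)) ↔ IsPseudoConvergent v s := by
  have key : ∀ x y : K, u (φ x) < u (φ y) ↔ v x < v y := by
    intro x y
    rw [← not_le, ← not_le]
    exact not_congr (heq y x)
  constructor
  · intro h ν ρ σ h1 h2
    have := h h1 h2
    rw [← map_sub φ, ← map_sub φ] at this
    exact (key _ _).mp this
  · intro h ν ρ σ h1 h2
    have := h h1 h2
    rw [← (key _ _)] at this
    rwa [map_sub φ, map_sub φ] at this

lemma pdvTransfer (v : Valuation K Γ) (heq : (u.comap φ).IsEquiv v) :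
    IsPseudoDivergent u (fun ν => φ (s ν)) ↔ IsPseudoDivergent v s := by
  have key : ∀ x y : K, u (φ x) < u (φ y) ↔ v x < v y := by
    intro x y
    rw [← not_le, ← not_le]
    exact not_congr (heq y x)
  constructor
  · intro h ν ρ σ h1 h2
    have := h h1 h2
    rw [← map_sub φ, ← map_sub φ] at this
    exact (key _ _).mp this
  · intro h ν ρ σ h1 h2
    have := h h1 h2
    rw [← (key _ _)] at this
    rwa [map_sub φ, map_sub φ] at this

end Aux3

/-- Let `E` be a strictly pseudo-monotone sequence having a pseudo-limit in
`K̄`, and let `p₁, p₂ ∈ 𝒫_E` be of minimal degree. Then `v_E(p₁) = v_E(p₂)` (equivalently,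
`v(p₁(s_ν)) = v(p₂(s_ν))` for all sufficiently large `ν`). -/
theorem stmt9 {K : Type u} [Field K] {Γ : Type*} [LinearOrderedCommGroupWithZero Γ]
    (v : Valuation K Γ) {Λ : Type*} [LinearOrder Λ] [WellFoundedLT Λ] [Nonempty Λ]
    (hnomax : ∀ ν : Λ, ∃ ρ : Λ, ν < ρ) (s : Λ → K)
    (hE : IsPseudoConvergent v s ∨ IsPseudoDivergent v s)
    (p₁ p₂ : Polynomial K) (hp₁ : InPE v s p₁) (hp₂ : InPE v s p₂)
    (hmin₁ : ∀ q : Polynomial K, InPE v s q → p₁.natDegree ≤ q.natDegree)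
    (hmin₂ : ∀ q : Polynomial K, InPE v s q → p₂.natDegree ≤ q.natDegree) :
    ∃ N : Λ, ∀ ⦃ν : Λ⦄, N ≤ ν →
      v (Polynomial.eval (s ν) p₁) = v (Polynomial.eval (s ν) p₂) := by
  classical
  have hdeg : p₂.natDegree = p₁.natDegree := le_antisymm (hmin₂ p₁ hp₁) (hmin₁ p₂ hp₂)
  by_cases hq0 : p₂ - p₁ = 0
  · rw [sub_eq_zero] at hq0
    exact ⟨Classical.arbitrary Λ, fun ν _ => by rw [hq0]⟩
  set q : Polynomial K := p₂ - p₁ with hqdef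
  obtain ⟨hmon₁, hirr₁, Γ₁, inst₁, u₁, heqv₁, α₁, hroot₁, hlim₁⟩ := hp₁
  obtain ⟨hmon₂, hirr₂, Γ₂, inst₂, u₂, heqv₂, α₂, hroot₂, hlim₂⟩ := hp₂
  have hp₁ne : p₁ ≠ 0 := hmon₁.ne_zero
  have hp₂ne : p₂ ≠ 0 := hmon₂.ne_zero
  have hqdeg : q.natDegree < p₁.natDegree := by
    have hd : p₂.degree = p₁.degree := by
      rw [Polynomial.degree_eq_natDegree hp₂ne, Polynomial.degree_eq_natDegree hp₁ne, hdeg]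
    have hlt : q.degree < p₂.degree :=
      Polynomial.degree_sub_lt hd hp₂ne (by rw [hmon₁.leadingCoeff, hmon₂.leadingCoeff])
    rw [hd, Polynomial.degree_eq_natDegree hp₁ne] at hlt
    exact (Polynomial.natDegree_lt_iff_degree_lt hq0).mpr hlt
  have hev : ∀ x : K, Polynomial.eval x p₂ = Polynomial.eval x p₁ + Polynomial.eval x q := by
    intro x
    rw [hqdef, Polynomial.eval_sub]
    ring
  have hlt₁ : ∀ x y : K, u₁ (algebraMap K (AlgebraicClosure K) x) <
      u₁ (algebraMap K (AlgebraicClosure K) y) ↔ v x < v y := fun x y => by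
    rw [← not_le, ← not_le]
    exact not_congr (heqv₁ y x)
  have hle₁ : ∀ x y : K, u₁ (algebraMap K (AlgebraicClosure K) x) ≤
      u₁ (algebraMap K (AlgebraicClosure K) y) ↔ v x ≤ v y := fun x y => heqv₁ x y
  have hlt₂ : ∀ x y : K, u₂ (algebraMap K (AlgebraicClosure K) x) <
      u₂ (algebraMap K (AlgebraicClosure K) y) ↔ v x < v y := fun x y => by
    rw [← not_le, ← not_le]
    exact not_congr (heqv₂ y x)
  have hab : ∃ a b : Λ, a < b := by
    obtain ⟨b, hb⟩ := hnomax (Classical.arbitrary Λ)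
    exact ⟨_, b, hb⟩
  have habc : ∃ a b c : Λ, a < b ∧ b < c := by
    obtain ⟨a, b, hab'⟩ := hab
    obtain ⟨c, hc⟩ := hnomax b
    exact ⟨a, b, c, hab', hc⟩
  have hqaev : ∀ γ ∈ (q.map (algebraMap K (AlgebraicClosure K))).roots,
      Polynomial.aeval γ q = 0 := by
    intro γ hγ
    have h2 := (Polynomial.mem_roots'.mp hγ).2
    rwa [Polynomial.IsRoot, Polynomial.eval_map, ← Polynomial.aeval_def] at h2
  have hcontra : ∀ γ : AlgebraicClosure K, Polynomial.aeval γ q = 0 →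
      IsPseudoLimitSPM u₁ (fun ν => algebraMap K (AlgebraicClosure K) (s ν)) γ → False := by
    intro γ hγ hl
    have halg : IsAlgebraic K γ := Algebra.IsAlgebraic.isAlgebraic γ
    have hint : IsIntegral K γ := halg.isIntegral
    have hInPE : InPE v s (minpoly K γ) :=
      ⟨minpoly.monic hint, minpoly.irreducible hint, Γ₁, inst₁, u₁, heqv₁, γ,
        minpoly.aeval K γ, hl⟩
    have h5 := hmin₁ _ hInPE
    have h6 : (minpoly K γ).natDegree ≤ q.natDegree :=
      Polynomial.natDegree_le_of_dvd (minpoly.dvd K γ hγ) hq0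
    omega
  rcases hE with hEc | hEd
  · -- pseudo-convergent case
    have hu₁ : IsPseudoConvergent u₁ (fun ν => algebraMap K (AlgebraicClosure K) (s ν)) :=
      (pcvTransfer u₁ (algebraMap K (AlgebraicClosure K)) s v heqv₁).mpr hEc
    have hu₂ : IsPseudoConvergent u₂ (fun ν => algebraMap K (AlgebraicClosure K) (s ν)) :=
      (pcvTransfer u₂ (algebraMap K (AlgebraicClosure K)) s v heqv₂).mpr hEc
    have hlim₁' : IsPseudoLimitPcv u₁ (fun ν => algebraMap K (AlgebraicClosure K) (s ν)) α₁ := by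
      rcases hlim₁ with ⟨_, hl⟩ | ⟨hdv, _⟩
      · exact hl
      · exfalso
        obtain ⟨a, b, c, h1, h2⟩ := habc
        exact absurd (hu₁ h1 h2) (asymm (hdv h1 h2))
    have hlim₂' : IsPseudoLimitPcv u₂ (fun ν => algebraMap K (AlgebraicClosure K) (s ν)) α₂ := by
      rcases hlim₂ with ⟨_, hl⟩ | ⟨hdv, _⟩
      · exact hl
      · exfalso
        obtain ⟨a, b, c, h1, h2⟩ := habc
        exact absurd (hu₂ h1 h2) (asymm (hdv h1 h2))
    obtain ⟨N₁, hA₁⟩ := keyA_pcv u₁ (algebraMap K (AlgebraicClosure K)) s hnomax hu₁ hp₁ne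
      (by rw [← Polynomial.aeval_def]; exact hroot₁) hlim₁'
    obtain ⟨N₂, hA₂⟩ := keyA_pcv u₂ (algebraMap K (AlgebraicClosure K)) s hnomax hu₂ hp₂ne
      (by rw [← Polynomial.aeval_def]; exact hroot₂) hlim₂'
    have hQc : ∀ γ ∈ (q.map (algebraMap K (AlgebraicClosure K))).roots,
        ∃ (N : Λ) (c : Γ₁), c ≠ 0 ∧ ∀ ⦃ν : Λ⦄, N < ν →
          u₁ (γ - algebraMap K (AlgebraicClosure K) (s ν)) = c := by
      intro γ hγ
      rcases pcvDichotomy u₁ (fun ν => algebraMap K (AlgebraicClosure K) (s ν)) hnomax hu₁ γ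
        with hl | hc
      · exact absurd (Or.inl ⟨hu₁, hl⟩) fun h => hcontra γ (hqaev γ hγ) h
      · exact hc
    obtain ⟨N₃, C, hC, hB⟩ := keyB u₁ (algebraMap K (AlgebraicClosure K)) s hq0 hQc
    have A1v : ∀ ⦃ν ρ : Λ⦄, N₁ ≤ ν → ν < ρ →
        v (Polynomial.eval (s ρ) p₁) < v (Polynomial.eval (s ν) p₁) :=
      fun ν ρ h h' => (hlt₁ _ _).mp (hA₁ h h')
    have A2v : ∀ ⦃ν ρ : Λ⦄, N₂ ≤ ν → ν < ρ →
        v (Polynomial.eval (s ρ) p₂) < v (Polynomial.eval (s ν) p₂) :=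
      fun ν ρ h h' => (hlt₂ _ _).mp (hA₂ h h')
    have hBv : ∀ ⦃ν μ : Λ⦄, N₃ < ν → N₃ < μ →
        v (Polynomial.eval (s ν) q) = v (Polynomial.eval (s μ) q) := by
      intro ν μ h h'
      exact le_antisymm ((hle₁ _ _).mp (le_of_eq (by rw [hB h, hB h'])))
        ((hle₁ _ _).mp (le_of_eq (by rw [hB h, hB h'])))
    obtain ⟨M₁, hM₁⟩ := hnomax (max (max N₁ N₂) N₃)
    have hM₁N₁ : N₁ ≤ M₁ := le_of_lt (lt_of_le_of_lt (le_trans (le_max_left _ _)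
      (le_max_left _ _)) hM₁)
    have hM₁N₂ : N₂ ≤ M₁ := le_of_lt (lt_of_le_of_lt (le_trans (le_max_right _ _)
      (le_max_left _ _)) hM₁)
    have hM₁N₃ : N₃ ≤ M₁ := le_of_lt (lt_of_le_of_lt (le_max_right _ _) hM₁)
    by_cases hcase : ∀ ν : Λ, M₁ < ν →
        v (Polynomial.eval (s ν) q) < v (Polynomial.eval (s ν) p₁)
    · obtain ⟨M₂, hM₂⟩ := hnomax M₁
      refine ⟨M₂, fun ν hν => ?_⟩
      have hM₁ν : M₁ < ν := lt_of_lt_of_le hM₂ hν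
      rw [hev (s ν)]
      exact (Valuation.map_add_eq_of_lt_left v (hcase ν hM₁ν)).symm
    · push_neg at hcase
      obtain ⟨w, hwM, hw⟩ := hcase
      exfalso
      have h1 : ∀ ρ : Λ, w < ρ → v (Polynomial.eval (s ρ) p₂) = v (Polynomial.eval (s ρ) q) := by
        intro ρ hρ
        have hp1 : v (Polynomial.eval (s ρ) p₁) < v (Polynomial.eval (s ρ) q) := by
          calc v (Polynomial.eval (s ρ) p₁) < v (Polynomial.eval (s w) p₁) :=
                A1v (hM₁N₁.trans (le_of_lt hwM)) hρ
            _ ≤ v (Polynomial.eval (s w) q) := hw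
            _ = v (Polynomial.eval (s ρ) q) := hBv (lt_of_le_of_lt hM₁N₃ hwM)
                (lt_of_le_of_lt hM₁N₃ (hwM.trans hρ))
        rw [hev (s ρ)]
        exact Valuation.map_add_eq_of_lt_right v hp1
      obtain ⟨ρ₁, hρ₁⟩ := hnomax w
      obtain ⟨ρ₂, hρ₂⟩ := hnomax ρ₁
      have h2 := A2v (hM₁N₂.trans (le_of_lt (hwM.trans hρ₁))) hρ₂
      rw [h1 ρ₁ hρ₁, h1 ρ₂ (hρ₁.trans hρ₂)] at h2
      rw [hBv (lt_of_le_of_lt hM₁N₃ (hwM.trans (hρ₁.trans hρ₂)))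
        (lt_of_le_of_lt hM₁N₃ (hwM.trans hρ₁))] at h2
      exact lt_irrefl _ h2
  · -- pseudo-divergent case
    have hu₁ : IsPseudoDivergent u₁ (fun ν => algebraMap K (AlgebraicClosure K) (s ν)) :=
      (pdvTransfer u₁ (algebraMap K (AlgebraicClosure K)) s v heqv₁).mpr hEd
    have hu₂ : IsPseudoDivergent u₂ (fun ν => algebraMap K (AlgebraicClosure K) (s ν)) :=
      (pdvTransfer u₂ (algebraMap K (AlgebraicClosure K)) s v heqv₂).mpr hEd
    have hlim₁' : IsPseudoLimitPdv u₁ (fun ν => algebraMap K (AlgebraicClosure K) (s ν)) α₁ := by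
      rcases hlim₁ with ⟨hcv, _⟩ | ⟨_, hl⟩
      · exfalso
        obtain ⟨a, b, c, h1, h2⟩ := habc
        exact absurd (hu₁ h1 h2) (asymm (hcv h1 h2))
      · exact hl
    have hlim₂' : IsPseudoLimitPdv u₂ (fun ν => algebraMap K (AlgebraicClosure K) (s ν)) α₂ := by
      rcases hlim₂ with ⟨hcv, _⟩ | ⟨_, hl⟩
      · exfalso
        obtain ⟨a, b, c, h1, h2⟩ := habc
        exact absurd (hu₂ h1 h2) (asymm (hcv h1 h2))
      · exact hl
    obtain ⟨N₁, hA₁⟩ := keyA_pdv u₁ (algebraMap K (AlgebraicClosure K)) s hab hnomax hu₁ hp₁ne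
      (by rw [← Polynomial.aeval_def]; exact hroot₁) hlim₁'
    obtain ⟨N₂, hA₂⟩ := keyA_pdv u₂ (algebraMap K (AlgebraicClosure K)) s hab hnomax hu₂ hp₂ne
      (by rw [← Polynomial.aeval_def]; exact hroot₂) hlim₂'
    have hQc : ∀ γ ∈ (q.map (algebraMap K (AlgebraicClosure K))).roots,
        ∃ (N : Λ) (c : Γ₁), c ≠ 0 ∧ ∀ ⦃ν : Λ⦄, N < ν →
          u₁ (γ - algebraMap K (AlgebraicClosure K) (s ν)) = c := by
      intro γ hγ
      rcases pdvDichotomy u₁ (fun ν => algebraMap K (AlgebraicClosure K) (s ν)) hab hnomax hu₁ γ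
        with hl | hc
      · exact absurd (Or.inr ⟨hu₁, hl⟩) fun h => hcontra γ (hqaev γ hγ) h
      · exact hc
    obtain ⟨N₃, C, hC, hB⟩ := keyB u₁ (algebraMap K (AlgebraicClosure K)) s hq0 hQc
    have A1v : ∀ ⦃ν ρ : Λ⦄, N₁ ≤ ν → ν < ρ →
        v (Polynomial.eval (s ν) p₁) < v (Polynomial.eval (s ρ) p₁) :=
      fun ν ρ h h' => (hlt₁ _ _).mp (hA₁ h h')
    have A2v : ∀ ⦃ν ρ : Λ⦄, N₂ ≤ ν → ν < ρ →
        v (Polynomial.eval (s ν) p₂) < v (Polynomial.eval (s ρ) p₂) :=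
      fun ν ρ h h' => (hlt₂ _ _).mp (hA₂ h h')
    have hBv : ∀ ⦃ν μ : Λ⦄, N₃ < ν → N₃ < μ →
        v (Polynomial.eval (s ν) q) = v (Polynomial.eval (s μ) q) := by
      intro ν μ h h'
      exact le_antisymm ((hle₁ _ _).mp (le_of_eq (by rw [hB h, hB h'])))
        ((hle₁ _ _).mp (le_of_eq (by rw [hB h, hB h'])))
    obtain ⟨M₁, hM₁⟩ := hnomax (max (max N₁ N₂) N₃)
    have hM₁N₁ : N₁ ≤ M₁ := le_of_lt (lt_of_le_of_lt (le_trans (le_max_left _ _)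
      (le_max_left _ _)) hM₁)
    have hM₁N₂ : N₂ ≤ M₁ := le_of_lt (lt_of_le_of_lt (le_trans (le_max_right _ _)
      (le_max_left _ _)) hM₁)
    have hM₁N₃ : N₃ ≤ M₁ := le_of_lt (lt_of_le_of_lt (le_max_right _ _) hM₁)
    by_cases hcase : ∀ ν : Λ, M₁ < ν →
        v (Polynomial.eval (s ν) p₁) < v (Polynomial.eval (s ν) q)
    · exfalso
      have h1 : ∀ ρ : Λ, M₁ < ρ →
          v (Polynomial.eval (s ρ) p₂) = v (Polynomial.eval (s ρ) q) := by
        intro ρ hρ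
        rw [hev (s ρ)]
        exact Valuation.map_add_eq_of_lt_right v (hcase ρ hρ)
      obtain ⟨ρ₁, hρ₁⟩ := hnomax M₁
      obtain ⟨ρ₂, hρ₂⟩ := hnomax ρ₁
      have h2 := A2v (hM₁N₂.trans (le_of_lt hρ₁)) hρ₂
      rw [h1 ρ₁ hρ₁, h1 ρ₂ (hρ₁.trans hρ₂)] at h2
      rw [hBv (lt_of_le_of_lt hM₁N₃ hρ₁) (lt_of_le_of_lt hM₁N₃ (hρ₁.trans hρ₂))] at h2
      exact lt_irrefl _ h2
    · push_neg at hcase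
      obtain ⟨w, hwM, hw⟩ := hcase
      obtain ⟨M₂, hM₂⟩ := hnomax w
      refine ⟨M₂, fun ν hν => ?_⟩
      have hwv : w < ν := lt_of_lt_of_le hM₂ hν
      have hq1 : v (Polynomial.eval (s ν) q) < v (Polynomial.eval (s ν) p₁) := by
        calc v (Polynomial.eval (s ν) q) = v (Polynomial.eval (s w) q) :=
              hBv (lt_of_le_of_lt hM₁N₃ (hwM.trans hwv)) (lt_of_le_of_lt hM₁N₃ hwM)
          _ ≤ v (Polynomial.eval (s w) p₁) := hw
          _ < v (Polynomial.eval (s ν) p₁) := A1v (hM₁N₁.trans (le_of_lt hwM)) hwv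
      rw [hev (s ν)]
      exact (Valuation.map_add_eq_of_lt_left v hq1).symm
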